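/- Let d ≥ 1, N ≥ 1, β ∈ ℝ, and for matrices A, B : Matrix (Fin N → Fin d) (Fin N → Fin d) ℂ define f(A,B) = Σ over S : Finset (Fin N) of β^{S.card} · Σ_{a,b} conj((Tr_S A) a b) · ((Tr_S B) a b), so that f(A,A) = Σ_S β^{S.card} ‖Tr_S A‖_F² is real. Then the following are equivalent: (i) for every X : Matrix (Fin N → Fin d) (Fin N → Fin d) ℂ with Matrix.rank X ≤ 2, 0 ≤ f(X,X); (ii) for all vectors u₁, v₁, u₂, v₂ : (Fin N → Fin d) → ℂ with Σ_i conj(u₁ i) · u₂ i = 0 and Σ_j conj(v₁ j) · v₂ j = 0, setting A i j = u₁ i · conj(v₁ j) and B i j = u₂ i · conj(v₂ j), one has 0 ≤ f(A,A) and (Re f(A,B))² ≤ f(A,A) · f(B,B). -/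

import Mathlib

open scoped ComplexConjugate

open scoped Matrix

set_option linter.unusedSectionVars false

/-- Partial trace of `X : Matrix (Fin N → Fin d) (Fin N → Fin d) ℂ` over the subsystems
in the finset `S`. -/
noncomputable def ptrace {N d : ℕ} (S : Finset (Fin N))
    (X : Matrix (Fin N → Fin d) (Fin N → Fin d) ℂ) :
    Matrix ({n // n ∈ Sᶜ} → Fin d) ({n // n ∈ Sᶜ} → Fin d) ℂ :=
  Matrix.of fun a b => ∑ e : {n // n ∈ S} → Fin d,
    X (fun n => if h : n ∈ S then e ⟨n, h⟩ else a ⟨n, Finset.mem_compl.mpr h⟩)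
      (fun n => if h : n ∈ S then e ⟨n, h⟩ else b ⟨n, Finset.mem_compl.mpr h⟩)

/-- The sesquilinear form `f(A,B) = ∑_S β^{|S|} Tr[(Tr_S A)ᴴ (Tr_S B)]`. -/
noncomputable def fform {N d : ℕ} (β : ℝ)
    (A B : Matrix (Fin N → Fin d) (Fin N → Fin d) ℂ) : ℂ :=
  ∑ S : Finset (Fin N), (β : ℂ) ^ S.card *
    ∑ a : {n // n ∈ Sᶜ} → Fin d, ∑ b : {n // n ∈ Sᶜ} → Fin d,
      conj (ptrace S A a b) * ptrace S B a b



section aux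
variable {m : Type*} [Fintype m] [DecidableEq m]

private lemma eq_zero_of_sum_conj_mul_self {f : m → ℂ}
    (h : ∑ k, conj (f k) * f k = 0) : f = 0 := by
  have h2 : ∑ k, (Complex.normSq (f k) : ℂ) = 0 := by
    rw [← h]; exact Finset.sum_congr rfl fun k _ => by
      rw [mul_comm, Complex.mul_conj]
  have h3 : ∑ k, Complex.normSq (f k) = 0 := by
    exact_mod_cast h2
  have h4 := (Finset.sum_eq_zero_iff_of_nonneg (fun k _ => Complex.normSq_nonneg (f k))).mp h3
  funext k
  exact Complex.normSq_eq_zero.mp (h4 k (Finset.mem_univ k))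

end aux

set_option maxHeartbeats 1000000 in
private lemma rank_two_decomp {m : Type*} [Fintype m] [DecidableEq m]
    (X : Matrix m m ℂ) (hX : X.rank ≤ 2) :
    ∃ u₁ v₁ u₂ v₂ : m → ℂ,
      (∑ i, conj (u₁ i) * u₂ i = 0) ∧ (∑ j, conj (v₁ j) * v₂ j = 0) ∧
      X = Matrix.of (fun i j => u₁ i * conj (v₁ j))
        + Matrix.of (fun i j => u₂ i * conj (v₂ j)) := by
  classical
  have hH : (Xᴴ * X).IsHermitian := Matrix.isHermitian_conjTranspose_mul_self X
  obtain ⟨U, hUstar, hUstar', D, hdiag⟩ :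
      ∃ U : Matrix m m ℂ, star U * U = 1 ∧ U * star U = 1 ∧
        ∃ D : m → ℝ, star U * (Xᴴ * X) * U = Matrix.diagonal (fun i => (D i : ℂ)) :=
    ⟨hH.eigenvectorUnitary, Unitary.coe_star_mul_self _, Unitary.coe_mul_star_self _,
      hH.eigenvalues, by simpa [Function.comp_def] using hH.conjStarAlgAut_star_eigenvectorUnitary⟩
  set w : m → m → ℂ := fun i k => U k i with hw
  set g : m → m → ℂ := fun i => X.mulVec (w i) with hg
  have key1 : ∀ i j, ∑ k, conj (U k i) * U k j = if i = j then 1 else 0 := by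
    intro i j
    have h := congrFun (congrFun hUstar i) j
    rw [Matrix.mul_apply, Matrix.one_apply] at h
    rw [← h]
    exact Finset.sum_congr rfl fun k _ => by rw [Matrix.star_apply, starRingEnd_apply]
  have key1' : ∀ k l, ∑ i, U k i * conj (U l i) = if k = l then 1 else 0 := by
    intro k l
    have h := congrFun (congrFun hUstar' k) l
    rw [Matrix.mul_apply, Matrix.one_apply] at h
    rw [← h]
    exact Finset.sum_congr rfl fun i _ => by rw [Matrix.star_apply, starRingEnd_apply]
  have hXU : ∀ i k, (X * U) k i = g i k := by
    intro i k
    simp [Matrix.mul_apply, hg, hw, Matrix.mulVec, dotProduct]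
  have hmat : (X * U)ᴴ * (X * U) = star U * (Xᴴ * X) * U := by
    rw [Matrix.conjTranspose_mul, Matrix.star_eq_conjTranspose]
    rw [Matrix.mul_assoc, ← Matrix.mul_assoc (Xᴴ), ← Matrix.mul_assoc]
  have key2 : ∀ i j, i ≠ j → ∑ k, conj (g i k) * g j k = 0 := by
    intro i j hij
    have h1 : (star U * (Xᴴ * X) * U) i j = 0 := by
      rw [hdiag]
      simp [Matrix.diagonal_apply_ne _ hij]
    rw [← h1, ← hmat, Matrix.mul_apply]
    exact Finset.sum_congr rfl fun k _ => by
      rw [Matrix.conjTranspose_apply, hXU i k, hXU j k, starRingEnd_apply]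
  have key3 : ∀ jj ll, X jj ll = ∑ i, g i jj * conj (w i ll) := by
    intro jj ll
    have step1 : ∀ i : m, g i jj * conj (w i ll) = ∑ k, X jj k * U k i * conj (U ll i) := by
      intro i
      simp [hg, hw, Matrix.mulVec, dotProduct, Finset.sum_mul]
    calc X jj ll = ∑ k, X jj k * (if k = ll then 1 else 0) := by simp
      _ = ∑ k, X jj k * ∑ i, U k i * conj (U ll i) := by
          exact Finset.sum_congr rfl fun k _ => by rw [key1']
      _ = ∑ k, ∑ i, X jj k * U k i * conj (U ll i) := by
          exact Finset.sum_congr rfl fun k _ => by rw [Finset.mul_sum]; exact Finset.sum_congr rfl fun i _ => by ring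
      _ = ∑ i, ∑ k, X jj k * U k i * conj (U ll i) := Finset.sum_comm
      _ = ∑ i, g i jj * conj (w i ll) := by
          exact Finset.sum_congr rfl fun i _ => (step1 i).symm
  set T : Finset m := Finset.univ.filter (fun i => g i ≠ 0) with hT
  have hgT : ∀ i, i ∉ T → g i = 0 := by
    intro i hi
    by_contra h
    exact hi (Finset.mem_filter.mpr ⟨Finset.mem_univ _, h⟩)
  have hnz : ∀ i : T, ∑ k, conj (g (i:m) k) * g (i:m) k ≠ 0 := by
    intro i h
    exact (Finset.mem_filter.mp i.2).2 (eq_zero_of_sum_conj_mul_self h)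
  have hli : LinearIndependent ℂ (fun i : T => g (i : m)) := by
    rw [Fintype.linearIndependent_iff]
    intro c hc j
    have h0 : ∑ k, conj (g (j:m) k) * ((∑ i : T, c i • g (i:m)) k) = 0 := by
      rw [hc]; simp
    have expand : ∑ k, conj (g (j:m) k) * ((∑ i : T, c i • g (i:m)) k)
        = ∑ i : T, c i * ∑ k, conj (g (j:m) k) * g (i:m) k := by
      calc ∑ k, conj (g (j:m) k) * ((∑ i : T, c i • g (i:m)) k)
          = ∑ k, ∑ i : T, c i * (conj (g (j:m) k) * g (i:m) k) := by
            refine Finset.sum_congr rfl fun k _ => ?_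
            rw [Finset.sum_apply, Finset.mul_sum]
            refine Finset.sum_congr rfl fun i _ => ?_
            simp only [Pi.smul_apply, smul_eq_mul]
            ring
        _ = ∑ i : T, ∑ k, c i * (conj (g (j:m) k) * g (i:m) k) := Finset.sum_comm
        _ = ∑ i : T, c i * ∑ k, conj (g (j:m) k) * g (i:m) k := by
            refine Finset.sum_congr rfl fun i _ => ?_
            rw [Finset.mul_sum]
    have single : ∑ i : T, c i * ∑ k, conj (g (j:m) k) * g (i:m) k
        = c j * ∑ k, conj (g (j:m) k) * g (j:m) k := by
      refine Finset.sum_eq_single j (fun i _ hij => ?_) (by simp)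
      rw [key2 (j:m) (i:m) (fun h => hij (Subtype.ext h.symm)), mul_zero]
    have := h0
    rw [expand, single] at this
    exact (mul_eq_zero.mp this).resolve_right (hnz j)
  have hTcard : T.card ≤ 2 := by
    have hsub : Submodule.span ℂ (Set.range fun i : T => g (i:m))
        ≤ LinearMap.range X.mulVecLin := by
      rw [Submodule.span_le]
      rintro y ⟨i, rfl⟩
      exact ⟨w i, rfl⟩
    calc T.card = Fintype.card T := (Fintype.card_coe T).symm
      _ = Module.finrank ℂ (Submodule.span ℂ (Set.range fun i : T => g (i:m))) :=
          (finrank_span_eq_card hli).symm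
      _ ≤ Module.finrank ℂ (LinearMap.range X.mulVecLin) := Submodule.finrank_mono hsub
      _ = X.rank := rfl
      _ ≤ 2 := hX
  have key4 : ∀ jj ll, X jj ll = ∑ i ∈ T, g i jj * conj (w i ll) := by
    intro jj ll
    rw [key3 jj ll]
    exact (Finset.sum_subset (Finset.subset_univ T) (fun i _ hiT => by
      rw [hgT i hiT]; simp)).symm
  rcases e : T.card with _ | _ | _ | n
  · refine ⟨0, 0, 0, 0, by simp, by simp, ?_⟩
    have hTe : T = ∅ := Finset.card_eq_zero.mp e
    ext jj ll
    simp [key4 jj ll, hTe]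
  · obtain ⟨a, ha⟩ := Finset.card_eq_one.mp e
    refine ⟨g a, w a, 0, 0, by simp, by simp, ?_⟩
    ext jj ll
    simp [key4 jj ll, ha]
  · obtain ⟨a, b, hab, hT2⟩ := Finset.card_eq_two.mp e
    refine ⟨g a, w a, g b, w b, key2 a b hab, ?_, ?_⟩
    · have := key1 a b
      rw [if_neg hab] at this
      simpa [hw] using this
    · ext jj ll
      rw [key4 jj ll, hT2, Finset.sum_pair hab]
      simp
  · omega

private lemma rank_le_two_aux {m : Type*} [Fintype m] [DecidableEq m]
    (u₁ v₁ u₂ v₂ : m → ℂ) (c : ℂ) :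
    ((Matrix.of fun i j => u₁ i * conj (v₁ j))
      + c • (Matrix.of fun i j => u₂ i * conj (v₂ j)) : Matrix m m ℂ).rank ≤ 2 := by
  classical
  set X : Matrix m m ℂ := (Matrix.of fun i j => u₁ i * conj (v₁ j))
      + c • (Matrix.of fun i j => u₂ i * conj (v₂ j)) with hX
  have hmem : ∀ x, X.mulVec x ∈ Submodule.span ℂ {u₁, u₂} := by
    intro x
    have hexp : X.mulVec x = (∑ j, conj (v₁ j) * x j) • u₁
        + (c * ∑ j, conj (v₂ j) * x j) • u₂ := by
      funext i
      simp only [hX, Matrix.mulVec, dotProduct, Matrix.add_apply, Matrix.smul_apply,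
        Matrix.of_apply, Pi.add_apply, Pi.smul_apply, smul_eq_mul, Finset.sum_add_distrib,
        Finset.sum_mul, Finset.mul_sum]
      rw [← Finset.sum_add_distrib]
      exact Finset.sum_congr rfl fun j _ => by ring
    rw [hexp]
    exact Submodule.add_mem _
      (Submodule.smul_mem _ _ (Submodule.subset_span (by simp)))
      (Submodule.smul_mem _ _ (Submodule.subset_span (by simp)))
  have hle : LinearMap.range X.mulVecLin ≤ Submodule.span ℂ {u₁, u₂} := by
    rintro y ⟨x, rfl⟩
    exact hmem x
  have h2 : Module.finrank ℂ (Submodule.span ℂ ({u₁, u₂} : Set (m → ℂ))) ≤ 2 := by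
    have hcoe : (↑({u₁, u₂} : Finset (m → ℂ)) : Set (m → ℂ)) = {u₁, u₂} := by simp
    calc Module.finrank ℂ (Submodule.span ℂ ({u₁, u₂} : Set (m → ℂ)))
        = Module.finrank ℂ (Submodule.span ℂ (↑({u₁, u₂} : Finset (m → ℂ)) : Set (m → ℂ))) := by
          rw [hcoe]
      _ ≤ ({u₁, u₂} : Finset (m → ℂ)).card := finrank_span_finset_le_card _
      _ ≤ 2 := by
          refine (Finset.card_insert_le _ _).trans ?_
          simp
  calc X.rank = Module.finrank ℂ (LinearMap.range X.mulVecLin) := rfl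
    _ ≤ Module.finrank ℂ (Submodule.span ℂ ({u₁, u₂} : Set (m → ℂ))) :=
        Submodule.finrank_mono hle
    _ ≤ 2 := h2

section ff
variable {N d : ℕ} (β : ℝ) (A B C : Matrix (Fin N → Fin d) (Fin N → Fin d) ℂ) (c : ℂ)

lemma ptrace_add (S : Finset (Fin N)) : ptrace S (A + B) (d := d) = ptrace S A + ptrace S B := by
  ext a b
  simp [ptrace, Finset.sum_add_distrib]

lemma ptrace_smul (S : Finset (Fin N)) : ptrace S (c • A) (d := d) = c • ptrace S A := by
  ext a b
  simp [ptrace, Finset.mul_sum]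

lemma fform_add_left : fform β (A + B) C = fform β A C + fform β B C := by
  simp only [fform, ptrace_add, Matrix.add_apply, map_add, add_mul,
    Finset.sum_add_distrib, mul_add]

lemma fform_add_right : fform β C (A + B) = fform β C A + fform β C B := by
  simp only [fform, ptrace_add, Matrix.add_apply, mul_add,
    Finset.sum_add_distrib]

lemma fform_smul_left : fform β (c • A) B = conj c * fform β A B := by
  simp only [fform, ptrace_smul, Matrix.smul_apply, smul_eq_mul, map_mul, Finset.mul_sum]
  refine Finset.sum_congr rfl fun S _ => ?_
  refine Finset.sum_congr rfl fun a _ => ?_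
  refine Finset.sum_congr rfl fun b _ => ?_
  ring

lemma fform_smul_right : fform β A (c • B) = c * fform β A B := by
  simp only [fform, ptrace_smul, Matrix.smul_apply, smul_eq_mul, Finset.mul_sum]
  refine Finset.sum_congr rfl fun S _ => ?_
  refine Finset.sum_congr rfl fun a _ => ?_
  refine Finset.sum_congr rfl fun b _ => ?_
  ring

set_option maxHeartbeats 2000000 in
lemma fform_conj : conj (fform β A B) = fform β B A := by
  simp only [fform, map_sum, map_mul, map_pow, Complex.conj_ofReal, Complex.conj_conj]
  refine Finset.sum_congr rfl fun S _ => ?_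
  congr 1
  refine Finset.sum_congr rfl fun a _ => ?_
  refine Finset.sum_congr rfl fun b _ => ?_
  ring

end ff

set_option maxHeartbeats 2000000 in
set_option maxHeartbeats 2000000 in
theorem n_undistillability_iff_rank_one_cauchy_schwarz
    (d N : ℕ) (hd : 1 ≤ d) (hN : 1 ≤ N) (β : ℝ) :
    (∀ X : Matrix (Fin N → Fin d) (Fin N → Fin d) ℂ, X.rank ≤ 2 →
        0 ≤ (fform β X X).re) ↔
      (∀ u₁ v₁ u₂ v₂ : (Fin N → Fin d) → ℂ,
        (∑ i : Fin N → Fin d, conj (u₁ i) * u₂ i = 0) →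
        (∑ j : Fin N → Fin d, conj (v₁ j) * v₂ j = 0) →
        (0 ≤ (fform β (Matrix.of fun i j => u₁ i * conj (v₁ j))
                      (Matrix.of fun i j => u₁ i * conj (v₁ j))).re) ∧
        ((fform β (Matrix.of fun i j => u₁ i * conj (v₁ j))
                  (Matrix.of fun i j => u₂ i * conj (v₂ j))).re ^ 2 ≤
          (fform β (Matrix.of fun i j => u₁ i * conj (v₁ j))
                   (Matrix.of fun i j => u₁ i * conj (v₁ j))).re *
          (fform β (Matrix.of fun i j => u₂ i * conj (v₂ j))
                   (Matrix.of fun i j => u₂ i * conj (v₂ j))).re)) := by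
  constructor
  · intro h u₁ v₁ u₂ v₂ hu hv
    set A : Matrix (Fin N → Fin d) (Fin N → Fin d) ℂ :=
      Matrix.of fun i j => u₁ i * conj (v₁ j) with hA
    set B : Matrix (Fin N → Fin d) (Fin N → Fin d) ℂ :=
      Matrix.of fun i j => u₂ i * conj (v₂ j) with hB
    have hrankA : A.rank ≤ 2 := by
      have := rank_le_two_aux u₁ v₁ u₂ v₂ 0
      simpa [hA] using this
    have hrankB : B.rank ≤ 2 := by
      have := rank_le_two_aux u₂ v₂ u₂ v₂ 0
      simpa [hB] using this
    have hp : 0 ≤ (fform β A A).re := h A hrankA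
    have hq : 0 ≤ (fform β B B).re := h B hrankB
    refine ⟨hp, ?_⟩
    have hquad : ∀ t : ℝ, 0 ≤ (fform β B B).re * (t * t)
        + (2 * (fform β A B).re) * t + (fform β A A).re := by
      intro t
      have hrank : (A + (t:ℂ) • B).rank ≤ 2 := rank_le_two_aux u₁ v₁ u₂ v₂ (t:ℂ)
      have h0 := h _ hrank
      have hexp : fform β (A + (t:ℂ) • B) (A + (t:ℂ) • B)
          = fform β A A + (t:ℂ) * fform β A B + (t:ℂ) * conj (fform β A B)
            + ((t:ℂ) * (t:ℂ)) * fform β B B := by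
        rw [fform_add_left, fform_add_right, fform_add_right, fform_smul_right,
          fform_smul_left, fform_smul_right, fform_smul_left, Complex.conj_ofReal,
          ← fform_conj β A B]
        ring
      rw [hexp] at h0
      have hre : (fform β A A + (t:ℂ) * fform β A B + (t:ℂ) * conj (fform β A B)
            + ((t:ℂ) * (t:ℂ)) * fform β B B).re
          = (fform β B B).re * (t * t) + (2 * (fform β A B).re) * t
            + (fform β A A).re := by
        simp only [Complex.add_re, Complex.mul_re, Complex.mul_im, Complex.ofReal_re,
          Complex.ofReal_im, Complex.conj_re, Complex.conj_im]
        ring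
      rw [hre] at h0
      exact h0
    have hd2 := discrim_le_zero hquad
    rw [discrim] at hd2
    nlinarith
  · intro h X hX
    obtain ⟨u₁, v₁, u₂, v₂, hu, hv, hXeq⟩ := rank_two_decomp X hX
    obtain ⟨hp, hcs⟩ := h u₁ v₁ u₂ v₂ hu hv
    have hu' : ∑ i, conj (u₂ i) * u₁ i = 0 := by
      have h2 := congrArg conj hu
      rw [map_sum, map_zero] at h2
      rw [← h2]
      exact Finset.sum_congr rfl fun i _ => by
        rw [map_mul, Complex.conj_conj]; ring
    have hv' : ∑ j, conj (v₂ j) * v₁ j = 0 := by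
      have h2 := congrArg conj hv
      rw [map_sum, map_zero] at h2
      rw [← h2]
      exact Finset.sum_congr rfl fun j _ => by
        rw [map_mul, Complex.conj_conj]; ring
    obtain ⟨hq, -⟩ := h u₂ v₂ u₁ v₁ hu' hv'
    set A : Matrix (Fin N → Fin d) (Fin N → Fin d) ℂ :=
      Matrix.of fun i j => u₁ i * conj (v₁ j) with hA
    set B : Matrix (Fin N → Fin d) (Fin N → Fin d) ℂ :=
      Matrix.of fun i j => u₂ i * conj (v₂ j) with hB
    rw [hXeq]
    have hexp : fform β (A + B) (A + B)
        = fform β A A + fform β A B + conj (fform β A B) + fform β B B := by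
      rw [fform_add_left, fform_add_right, fform_add_right, ← fform_conj β A B]
      ring
    rw [hexp]
    have hre : (fform β A A + fform β A B + conj (fform β A B) + fform β B B).re
        = (fform β A A).re + 2 * (fform β A B).re + (fform β B B).re := by
      simp only [Complex.add_re, Complex.conj_re]
      ring
    rw [hre]
    nlinarith [hcs, hp, hq, sq_nonneg ((fform β A A).re - (fform β B B).re),
      sq_nonneg ((fform β A A).re + (fform β B B).re)]
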